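/- Let (G,s_1,t_1,…,s_k,t_k) be a problem instance, let x be a key quality of it, and let (P_1,…,P_k) be an x-linkage for (G,s_1,t_1,…,s_k,t_k). Then for each j with 1 ≤ j ≤ k, the path P_j is a minimal path of G; that is, if P_j has vertices v_1,…,v_n in order, then j' ≤ i'+1 for every edge v_{i'}v_{j'} of G with 1 ≤ i',j' ≤ n. -/

import Mathlib

open List

/-! Basic digraph/path definitions.  A digraph on `V` is a relation `G : V → V → Prop`
(looplessness is expressed by `Irreflexive G`).  A (directed) path is a nonempty list of
distinct vertices in which consecutive vertices are joined by edges of `G`. -/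

/-- `uv` is an edge of the path `P`, i.e. `u,v` are consecutive on `P`. -/
def PEdge {V : Type} (P : List V) (u v : V) : Prop := [u, v] <:+: P

/-- `P` is a directed path of the digraph `G`. -/
def IsPath {V : Type} (G : V → V → Prop) (P : List V) : Prop :=
  P ≠ [] ∧ P.Nodup ∧ P.Chain' G

/-- `P` is a minimal path of `G`: for every edge `v_i v_j` of `G` between vertices of `P`,
`j ≤ i + 1`. -/
def IsMinimal {V : Type} (G : V → V → Prop) (P : List V) : Prop :=
  ∀ i j : Fin P.length, G (P.get i) (P.get j) → (j : ℕ) ≤ (i : ℕ) + 1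

/-- `G` is `d`-path-dominant. -/
def PathDominant {V : Type} (d : ℕ) (G : V → V → Prop) : Prop :=
  ∀ P : List V, IsPath G P → IsMinimal G P → P.length = d →
    ∀ v : V, v ∈ P ∨ (∃ w ∈ P, G v w) ∨ (∃ w ∈ P, G w v)

/-- A linkage: a tuple of pairwise vertex-disjoint paths. -/
def IsLinkage {V : Type} (G : V → V → Prop) {k : ℕ} (L : Fin k → List V) : Prop :=
  (∀ i, IsPath G (L i)) ∧ ∀ i j : Fin k, i ≠ j → ∀ v, v ∈ L i → v ∉ L j

/-- `v` is `Q`-outward: `v ∉ Q` and no vertex of `Q` is adjacent from `v`. -/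
def Outward {V : Type} (G : V → V → Prop) (Q : List V) (v : V) : Prop :=
  v ∉ Q ∧ ∀ w ∈ Q, ¬ G v w

/-- `v` is `Q`-inward: `v ∉ Q` and no vertex of `Q` is adjacent to `v`. -/
def Inward {V : Type} (G : V → V → Prop) (Q : List V) (v : V) : Prop :=
  v ∉ Q ∧ ∀ w ∈ Q, ¬ G w v

section Inhab
variable {V : Type} [Inhabited V]

/-- A linkage for the problem instance `(G, s₁, t₁, …, s_k, t_k)`. -/
def IsLinkageFor (G : V → V → Prop) {k : ℕ} (s t : Fin k → V) (L : Fin k → List V) : Prop :=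
  IsLinkage G L ∧ ∀ i, (L i).head! = s i ∧ (L i).getLast! = t i

/-- `x` is a quality: there is an `x`-linkage for the instance. -/
def IsQuality (G : V → V → Prop) {k : ℕ} (s t : Fin k → V) (x : Fin k → ℕ) : Prop :=
  ∃ L : Fin k → List V, IsLinkageFor G s t L ∧ ∀ i, (L i).length = x i

/-- `x` is a key quality: a quality not strictly dominating any other quality. -/
def IsKeyQuality (G : V → V → Prop) {k : ℕ} (s t : Fin k → V) (x : Fin k → ℕ) : Prop :=
  IsQuality G s t x ∧ ¬ ∃ y : Fin k → ℕ, IsQuality G s t y ∧ y ≤ x ∧ y ≠ x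

/-- `v` is an internal vertex of the linkage `M`. -/
def Internal {k : ℕ} (M : Fin k → List V) (v : V) : Prop :=
  (∃ i, v ∈ M i) ∧ ∀ i, v ≠ (M i).head! ∧ v ≠ (M i).getLast!

/-- The linkage `M` is internally disjoint from the linkage `L`. -/
def InternallyDisjointFrom {k l : ℕ} (M : Fin k → List V) (L : Fin l → List V) : Prop :=
  ∀ v, Internal M v → ∀ i, v ∉ L i

/-- A planar `(Q,R)`-matching of cardinality `n`. -/
def IsPlanarMatching (G : V → V → Prop) (Q R : List V) {n : ℕ} (M : Fin n → List V) : Prop :=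
  IsLinkage G M ∧ (∀ j, (M j).length = 2 ∨ (M j).length = 3) ∧
  (List.ofFn fun j => (M j).head!).Sublist Q ∧
  (List.ofFn fun j => (M j).getLast!).Sublist R

/-- A planar `(Q,R)`-matching is `s`-spaced. -/
def SSpaced (Q R : List V) {n : ℕ} (M : Fin n → List V) (s : ℕ) : Prop :=
  (∀ W : List V, W <:+: Q → W.length ≤ s →
    ∀ j j' : Fin n, (∃ v ∈ W, v ∈ M j) → (∃ v ∈ W, v ∈ M j') → j = j') ∧
  (∀ W : List V, W <:+: R → W.length ≤ s →
    ∀ j j' : Fin n, (∃ v ∈ W, v ∈ M j) → (∃ v ∈ W, v ∈ M j') → j = j')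

/-- `A(L)`: vertices outside `V(L)` that are `(M_j ∖ t(M_j))`-inward for some `j`
with `t(M_j) ≠ t_j`. -/
def RailA (G : V → V → Prop) {k : ℕ} (t : Fin k → V) (L : Fin k → List V) : Set V :=
  {v | (∀ i, v ∉ L i) ∧ ∃ j, (L j).getLast! ≠ t j ∧ ∀ w ∈ (L j).dropLast, ¬ G w v}

/-- `B(L)`: vertices outside `V(L)` that are `(M_j ∖ s(M_j))`-outward for some `j`
with `s(M_j) ≠ s_j`. -/
def RailB (G : V → V → Prop) {k : ℕ} (s : Fin k → V) (L : Fin k → List V) : Set V :=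
  {v | (∀ i, v ∉ L i) ∧ ∃ j, (L j).head! ≠ s j ∧ ∀ w ∈ (L j).tail, ¬ G v w}

/-- The confusion of the linkage `L`, namely `|A(L) ∩ B(L)|`. -/
noncomputable def Confusion (G : V → V → Prop) {k : ℕ} (s t : Fin k → V)
    (L : Fin k → List V) : ℕ :=
  (RailA G t L ∩ RailB G s L).ncard

/-- `(L, X, Y)` is a `(k,m,c)`-rail in the problem instance. -/
def IsRail (G : V → V → Prop) {k : ℕ} (s t : Fin k → V) (m c : ℕ)
    (L : Fin k → List V) (X Y : Set V) : Prop :=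
  IsLinkage G L ∧
  (∀ j, (L j).length ≤ 2*m ∧
    ((L j).length < 2*m → (L j).head! = s j ∨ (L j).getLast! = t j)) ∧
  Confusion G s t L ≤ c ∧
  Disjoint X Y ∧
  X ⊆ RailA G t L ∧ Y ⊆ RailB G s L ∧ X ∪ Y = RailA G t L ∪ RailB G s L

end Inhab

/-- The data of a potential rail: a `k`-tuple of paths together with two vertex sets. -/
abbrev RailT (V : Type) (k : ℕ) := (Fin k → List V) × Set V × Set V

section Inhab2
variable {V : Type} [Inhabited V]

/-- The edge relation `(L,X,Y) → (L',X',Y')` between distinct rails. -/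
def RailStep (G : V → V → Prop) {k : ℕ} (r r' : RailT V k) : Prop :=
  r ≠ r' ∧
  (∀ i, ∃ W : List V, IsPath G W ∧ W.head! = (r.1 i).head! ∧
    W.getLast! = (r'.1 i).getLast! ∧
    (∀ v, v ∈ W ↔ v ∈ r.1 i ∨ v ∈ r'.1 i) ∧
    (∀ u v, PEdge W u v ↔ PEdge (r.1 i) u v ∨ PEdge (r'.1 i) u v)) ∧
  (∀ i, ∀ v ∈ r'.1 i, v ∈ r.1 i ∨ v ∈ r.2.1) ∧
  (∀ i, ∀ v ∈ r.1 i, v ∈ r'.1 i ∨ v ∈ r'.2.2) ∧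
  r'.2.1 ⊆ r.2.1 ∧ r.2.2 ⊆ r'.2.2

/-- A path from `s₀` to `t₀` in the `(k,m,c)`-tracker, recorded by its list of
intermediate rail vertices. -/
def IsTrackerPath (G : V → V → Prop) {k : ℕ} (s t : Fin k → V) (m c : ℕ)
    (rs : List (RailT V k)) : Prop :=
  rs ≠ [] ∧ rs.Nodup ∧ rs.Chain' (RailStep G) ∧
  (∀ r ∈ rs, IsRail G s t m c r.1 r.2.1 r.2.2) ∧
  (∀ r ∈ rs.head?, ∀ j, (r.1 j).head! = s j) ∧
  (∀ r ∈ rs.getLast?, ∀ j, (r.1 j).getLast! = t j)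

end Inhab2

/-- A tracker path traces the linkage `P`: each `P j` is the union (as a digraph) of the
`j`-th members of the rails of the path. -/
def Traces {V : Type} {k : ℕ} (rs : List (RailT V k)) (P : Fin k → List V) : Prop :=
  ∀ j, (∀ v, v ∈ P j ↔ ∃ r ∈ rs, v ∈ r.1 j) ∧
       (∀ u v, PEdge (P j) u v ↔ ∃ r ∈ rs, PEdge (r.1 j) u v)

section Dec
variable {V : Type} [DecidableEq V]

/-- `V(L)`, the set of vertices of the linkage `L`, as a finset. -/
def LV {k : ℕ} (L : Fin k → List V) : Finset V :=
  Finset.univ.biUnion fun i => (L i).toFinset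

/-- `B` is acceptable for the linkage `L` (with parameters `d, k`). -/
def Acceptable [Inhabited V] (G : V → V → Prop) (d k : ℕ) (L : Fin k → List V)
    (B : Finset V) : Prop :=
  (∀ j : Fin k, ∀ u v : V, PEdge (L j) u v → v ∈ B → u ∈ B) ∧
  ∀ i j : Fin k, ¬ ∃ M : Fin ((k-1)*d + k^2 + 2) → List V,
    IsPlanarMatching G ((L i).filter (· ∈ B)) ((L j).filter (· ∉ B)) M ∧
    InternallyDisjointFrom M L

/-- Labels along a tracker path, after the first rail: consecutive rails `r, r'`
contribute `|V(M'_j) ∖ V(M_j)|` in coordinate `j`. -/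
def labelFrom {k : ℕ} : RailT V k → List (RailT V k) → (Fin k → ℕ)
  | _, [] => fun _ => 0
  | r, r' :: rest => (fun j => ((r'.1 j).toFinset \ (r.1 j).toFinset).card) + labelFrom r' rest

/-- The total label `l(P)` of a tracker path with rail list `rs`: the edge from `s₀`
contributes `|V(M_j)|`, each rail-to-rail edge contributes the difference counts, and the
edge to `t₀` contributes `0`. -/
def pathLabel {k : ℕ} : List (RailT V k) → (Fin k → ℕ)
  | [] => fun _ => 0
  | r :: rest => (fun j => (r.1 j).toFinset.card) + labelFrom r rest

/-- `Q_{p,j}`: the maximal subpath of `P` with at most `m` vertices whose last vertex is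
the last vertex of `P` among `v_1, …, v_p` (null if there is none). -/
def Qseg (m : ℕ) (e : List V) (p : ℕ) (P : List V) : List V :=
  (P.filter (· ∈ e.take p)).drop ((P.filter (· ∈ e.take p)).length - m)

/-- `R_{p,j}`: the maximal subpath of `P` with at most `m` vertices whose first vertex is
the first vertex of `P` among `v_{p+1}, …, v_n` (null if there is none). -/
def Rseg (m : ℕ) (e : List V) (p : ℕ) (P : List V) : List V :=
  (P.filter (· ∈ e.drop p)).take m

/-- `M_{p,j} = Q_{p,j} ∪ R_{p,j}` (together with the connecting edge of `P` when both
are non-null). -/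
def Mseg (m : ℕ) (e : List V) (p : ℕ) (P : List V) : List V :=
  Qseg m e p P ++ Rseg m e p P

end Dec

private lemma shortcut_aux {V : Type} (G : V → V → Prop) (P : List V)
    (hPne : P ≠ []) (hPnd : P.Nodup) (hPch : P.Chain' G)
    (a b : Fin P.length) (hadj : G (P.get a) (P.get b)) (hc : (a : ℕ) + 1 < (b : ℕ)) :
    ∃ Q : List V, IsPath G Q ∧ Q <+ P ∧ Q.head? = P.head? ∧
      Q.getLast? = P.getLast? ∧ Q.length < P.length := by
  have ha : (a : ℕ) < P.length := a.isLt
  have hb : (b : ℕ) < P.length := b.isLt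
  refine ⟨P.take ((a:ℕ)+1) ++ P.drop (b:ℕ), ?_⟩
  have htlen : (P.take ((a:ℕ)+1)).length = (a:ℕ)+1 := by
    simp [List.length_take]
  have htne : P.take ((a:ℕ)+1) ≠ [] := by
    intro h; rw [h] at htlen; simp at htlen
  have hdlen : (P.drop (b:ℕ)).length = P.length - (b:ℕ) := List.length_drop
  have hdne : P.drop (b:ℕ) ≠ [] := by
    intro h; rw [h] at hdlen; simp at hdlen; omega
  have hsub : P.take ((a:ℕ)+1) ++ P.drop (b:ℕ) <+ P := by
    have h1 : P.drop (b:ℕ) <+ P.drop ((a:ℕ)+1) := by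
      rw [show (b:ℕ) = ((a:ℕ)+1) + ((b:ℕ) - ((a:ℕ)+1)) by omega, ← List.drop_drop]
      exact List.drop_sublist _ _
    calc P.take ((a:ℕ)+1) ++ P.drop (b:ℕ)
        <+ P.take ((a:ℕ)+1) ++ P.drop ((a:ℕ)+1) := h1.append_left _
      _ = P := List.take_append_drop _ _
  have hgl : (P.take ((a:ℕ)+1)).getLast? = some (P.get a) := by
    rw [List.getLast?_eq_getElem?, htlen]
    simp only [Nat.add_sub_cancel, List.getElem?_take]
    rw [if_pos (Nat.lt_succ_self _), List.getElem?_eq_getElem ha]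
    rfl
  have hhd : (P.drop (b:ℕ)).head? = some (P.get b) := by
    rw [List.head?_drop, List.getElem?_eq_getElem hb]; rfl
  refine ⟨⟨?_, hPnd.sublist hsub, ?_⟩, hsub, ?_, ?_, ?_⟩
  · intro h; exact htne (List.append_eq_nil_iff.mp h).1
  · unfold List.Chain'; rw [List.isChain_append]
    refine ⟨List.IsChain.take hPch _, List.IsChain.drop hPch _, ?_⟩
    intro u hu v hv
    rw [hgl] at hu; rw [hhd] at hv
    simp only [Option.mem_def, Option.some.injEq] at hu hv
    rw [← hu, ← hv]; exact hadj
  · rw [List.head?_append_of_ne_nil _ htne, List.head?_take,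
      if_neg (Nat.succ_ne_zero _)]
  · rw [List.getLast?_append]
    have h1 : (P.drop (b:ℕ)).getLast? = P.getLast? := by
      rw [List.getLast?_eq_getElem?, List.getLast?_eq_getElem?, hdlen,
        List.getElem?_drop]
      congr 1
      omega
    rw [h1]
    cases h2 : P.getLast? with
    | none => exact absurd (List.getLast?_eq_none_iff.mp h2) hPne
    | some v => rfl
  · rw [List.length_append, htlen, hdlen]; omega

theorem stmt6 {V : Type} [Fintype V] [DecidableEq V] [Inhabited V]
    (G : V → V → Prop) (hG : Irreflexive G)
    (k : ℕ) (s t : Fin k → V) (x : Fin k → ℕ) (hx : IsKeyQuality G s t x)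
    (L : Fin k → List V) (hL : IsLinkageFor G s t L) (hLx : ∀ i, (L i).length = x i)
    (j : Fin k) : IsMinimal G (L j) := by
  intro a b hadj
  by_contra hc
  push_neg at hc
  obtain ⟨⟨hpaths, hdisj⟩, hends⟩ := hL
  obtain ⟨hPne, hPnd, hPch⟩ := hpaths j
  obtain ⟨Q, hQpath, hsub, hQhead, hQlast, hQlen⟩ :=
    shortcut_aux G (L j) hPne hPnd hPch a b hadj hc
  set L' := Function.update L j Q with hL'
  have hL'j : L' j = Q := Function.update_self _ _ _
  have hL'ne : ∀ i, i ≠ j → L' i = L i := fun i hi => Function.update_of_ne hi _ _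
  have hmem : ∀ i, ∀ v, v ∈ L' i → v ∈ L i := by
    intro i v hv
    rcases eq_or_ne i j with rfl | hij
    · rw [hL'j] at hv; exact hsub.subset hv
    · rwa [hL'ne i hij] at hv
  have hQual : IsQuality G s t (fun i => (L' i).length) := by
    refine ⟨L', ⟨⟨?_, ?_⟩, ?_⟩, fun _ => rfl⟩
    · intro i
      rcases eq_or_ne i j with rfl | hij
      · rw [hL'j]; exact hQpath
      · rw [hL'ne i hij]; exact hpaths i
    · intro i i' hii' v hv hv'
      exact hdisj i i' hii' v (hmem i v hv) (hmem i' v hv')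
    · intro i
      rcases eq_or_ne i j with rfl | hij
      · rw [hL'j]
        constructor
        · rw [List.head!_eq_head?, hQhead, ← List.head!_eq_head?]
          exact (hends i).1
        · obtain ⟨v, hv⟩ : ∃ v, (L i).getLast? = some v := by
            cases h2 : (L i).getLast? with
            | none => exact absurd (List.getLast?_eq_none_iff.mp h2) hPne
            | some v => exact ⟨v, rfl⟩
          rw [List.getLast!_of_getLast? (hQlast.trans hv),
            ← List.getLast!_of_getLast? hv]
          exact (hends i).2
      · rw [hL'ne i hij]; exact hends i
  refine hx.2 ⟨fun i => (L' i).length, hQual, ?_, ?_⟩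
  · intro i
    rcases eq_or_ne i j with rfl | hij
    · simp only [hL'j, ← hLx i]; exact le_of_lt hQlen
    · simp only [hL'ne i hij, hLx i, le_refl]
  · intro h
    have h2 := congrFun h j
    simp only [hL'j, ← hLx j] at h2
    omega
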